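/- Let G ∈ F_q^{m×n} and H ∈ F_q^{(n−m)×n} be matrices of full row rank with G·Hᵀ = 0, and let g(x) = Gx, h(x) = Hx. For any linear subspace V ⊆ F_q^n with dim V = m: g restricted to V is a bijection onto F_q^m if and only if h restricted to the orthogonal complement V^⊥ is injective. -/

import Mathlib

open Matrix Module

noncomputable def dotForm (F : Type*) [Field F] (n : ℕ) :
    LinearMap.BilinForm F (Fin n → F) :=
  LinearMap.mk₂ F (fun x y => x ⬝ᵥ y)
    (fun x y z => add_dotProduct x y z)
    (fun c x y => smul_dotProduct c x y)
    (fun x y z => dotProduct_add x y z)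
    (fun c x y => dotProduct_smul c x y)

lemma dotForm_apply (F : Type*) [Field F] (n : ℕ) (x y : Fin n → F) :
    dotForm F n x y = x ⬝ᵥ y := rfl

lemma dotForm_refl (F : Type*) [Field F] (n : ℕ) : (dotForm F n).IsRefl := by
  intro x y h
  rw [dotForm_apply] at h ⊢
  rw [dotProduct_comm]
  exact h

lemma dotForm_nondeg (F : Type*) [Field F] (n : ℕ) : (dotForm F n).Nondegenerate := by
  refine ⟨?_, ?_⟩
  · intro x h
    ext i
    have := h (Pi.single i 1)
    rwa [dotForm_apply, dotProduct_single, mul_one] at this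
  · intro x h
    ext i
    have := h (Pi.single i 1)
    rwa [dotForm_apply, single_dotProduct, one_mul] at this

lemma dotForm_orthogonal_sup {F : Type*} [Field F] {n : ℕ}
    (A C : Submodule F (Fin n → F)) :
    (dotForm F n).orthogonal (A ⊔ C) =
      (dotForm F n).orthogonal A ⊓ (dotForm F n).orthogonal C := by
  apply le_antisymm
  · exact le_inf ((dotForm F n).orthogonal_le le_sup_left)
      ((dotForm F n).orthogonal_le le_sup_right)
  · rintro y ⟨hyA, hyC⟩ v hv
    obtain ⟨a, ha, c, hc, rfl⟩ := Submodule.mem_sup.mp hv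
    have h1 : a ⬝ᵥ y = 0 := hyA a ha
    have h2 : c ⬝ᵥ y = 0 := hyC c hc
    show (a + c) ⬝ᵥ y = 0
    rw [add_dotProduct, h1, h2, add_zero]

theorem stmt_5 (F : Type*) [Field F] [Fintype F] (m n : ℕ) (hmn : m ≤ n)
    (G : Matrix (Fin m) (Fin n) F) (H : Matrix (Fin (n - m)) (Fin n) F)
    (hG : G.rank = m) (hH : H.rank = n - m) (hGH : G * Hᵀ = 0)
    (V : Submodule F (Fin n → F)) (hV : Module.finrank F V = m) :
    Function.Bijective (fun v : V => G.mulVec (v : Fin n → F)) ↔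
      Set.InjOn (fun y => H.mulVec y) {y : Fin n → F | ∀ v ∈ V, y ⬝ᵥ v = 0} := by
  classical
  set B := dotForm F n with hB
  set kG := LinearMap.ker G.mulVecLin with hkGdef
  set kH := LinearMap.ker H.mulVecLin with hkHdef
  have hfin : Module.finrank F (Fin n → F) = n := Module.finrank_fin_fun F
  -- finrank of kernels
  have hfkG : Module.finrank F kG = n - m := by
    have h1 := G.mulVecLin.finrank_range_add_finrank_ker
    rw [hfin] at h1
    have h2 : Module.finrank F (LinearMap.range G.mulVecLin) = m := hG
    rw [hkGdef]
    omega
  -- key dot product computation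
  have key : ∀ (c : Fin (n - m) → F) (y : Fin n → F),
      (Hᵀ *ᵥ c) ⬝ᵥ y = c ⬝ᵥ (H *ᵥ y) := by
    intro c y
    rw [dotProduct_comm, dotProduct_mulVec, vecMul_transpose, dotProduct_comm]
  -- row space of H equals kernel of G
  have hrowH : LinearMap.range Hᵀ.mulVecLin = kG := by
    apply Submodule.eq_of_le_of_finrank_le
    · rintro v ⟨c, rfl⟩
      simp only [hkGdef, LinearMap.mem_ker, Matrix.mulVecLin_apply,
        Matrix.mulVec_mulVec, hGH, Matrix.zero_mulVec]
    · have h2 : Module.finrank F (LinearMap.range Hᵀ.mulVecLin) = n - m := by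
        have := Matrix.rank_transpose H
        rw [hH] at this
        exact this
      rw [h2, hfkG]
  -- kernel of H equals orthogonal of kG
  have hkH : kH = B.orthogonal kG := by
    ext y
    constructor
    · intro hy v hv
      rw [← hrowH] at hv
      obtain ⟨c, rfl⟩ := hv
      have hy0 : H *ᵥ y = 0 := hy
      show (Hᵀ *ᵥ c) ⬝ᵥ y = 0
      rw [key, hy0, dotProduct_zero]
    · intro hy
      have : ∀ i, (H *ᵥ y) i = 0 := by
        intro i
        have hmem : Hᵀ *ᵥ Pi.single i 1 ∈ kG := by
          rw [← hrowH]; exact ⟨Pi.single i 1, rfl⟩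
        have h3 : (Hᵀ *ᵥ Pi.single i 1) ⬝ᵥ y = 0 := hy _ hmem
        rw [key, single_dotProduct, one_mul] at h3
        exact h3
      exact funext this
  -- the orthogonal set
  have hWset : {y : Fin n → F | ∀ v ∈ V, y ⬝ᵥ v = 0} = ↑(B.orthogonal V) := by
    ext y
    constructor
    · intro h v hv
      show v ⬝ᵥ y = 0
      rw [dotProduct_comm]; exact h v hv
    · intro h v hv
      have h4 : v ⬝ᵥ y = 0 := h v hv
      rw [dotProduct_comm] at h4; exact h4
  -- LHS iff
  have hLHS : Function.Bijective (fun v : V => G.mulVec (v : Fin n → F)) ↔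
      V ⊓ kG = ⊥ := by
    constructor
    · intro hbij
      rw [Submodule.eq_bot_iff]
      rintro x ⟨hxV, hxk⟩
      have hx0 : G *ᵥ x = 0 := hxk
      have : (⟨x, hxV⟩ : V) = (0 : V) := by
        apply hbij.1
        show G *ᵥ x = G *ᵥ ((0 : V) : Fin n → F)
        simp [hx0]
      exact congrArg Subtype.val this
    · intro hbot
      have hinj : Function.Injective (fun v : V => G.mulVec (v : Fin n → F)) := by
        intro a b hab
        have hsub : ((a : Fin n → F) - b) ∈ V ⊓ kG := by
          refine ⟨sub_mem a.2 b.2, ?_⟩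
          show G.mulVecLin ((a : Fin n → F) - b) = 0
          rw [map_sub]
          simp only [Matrix.mulVecLin_apply]
          rw [show G *ᵥ (a : Fin n → F) = G *ᵥ (b : Fin n → F) from hab, sub_self]
        rw [hbot, Submodule.mem_bot, sub_eq_zero] at hsub
        exact Subtype.ext hsub
      refine ⟨hinj, ?_⟩
      have heq : (fun v : V => G.mulVec (v : Fin n → F)) =
          ⇑(G.mulVecLin.comp V.subtype) := rfl
      rw [heq] at hinj ⊢
      exact (LinearMap.injective_iff_surjective_of_finrank_eq_finrank
        (by rw [hV, Module.finrank_fin_fun])).mp hinj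
  -- RHS iff
  have hRHS : Set.InjOn (fun y => H.mulVec y)
      {y : Fin n → F | ∀ v ∈ V, y ⬝ᵥ v = 0} ↔ B.orthogonal V ⊓ kH = ⊥ := by
    rw [hWset]
    constructor
    · intro hinj
      rw [Submodule.eq_bot_iff]
      rintro x ⟨hxW, hxk⟩
      have hx0 : H *ᵥ x = 0 := hxk
      exact hinj hxW (Submodule.zero_mem _) (by simp [hx0])
    · intro hbot y1 h1 y2 h2 heq
      have hsub : (y1 - y2) ∈ B.orthogonal V ⊓ kH := by
        refine ⟨sub_mem h1 h2, ?_⟩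
        show H.mulVecLin (y1 - y2) = 0
        rw [map_sub]
        simp only [Matrix.mulVecLin_apply]
        rw [show H *ᵥ y1 = H *ᵥ y2 from heq, sub_self]
      rw [hbot, Submodule.mem_bot, sub_eq_zero] at hsub
      exact hsub
  rw [hLHS, hRHS, hkH, ← dotForm_orthogonal_sup, ← hB]
  -- now: V ⊓ kG = ⊥ ↔ B.orthogonal (V ⊔ kG) = ⊥
  have hsum : Module.finrank F V + Module.finrank F kG = n := by
    rw [hV, hfkG]; omega
  constructor
  · intro hbot
    have htop : V ⊔ kG = ⊤ := by
      apply Submodule.eq_top_of_finrank_eq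
      have := Submodule.finrank_sup_add_finrank_inf_eq V kG
      rw [hbot, finrank_bot, add_zero] at this
      rw [this, hsum, hfin]
    rw [htop]
    exact LinearMap.BilinForm.orthogonal_top_eq_bot (dotForm_nondeg F n)
  · intro hbot
    have htop : V ⊔ kG = ⊤ := by
      have := LinearMap.BilinForm.orthogonal_orthogonal (dotForm_nondeg F n)
        (dotForm_refl F n) (V ⊔ kG)
      rw [hbot] at this
      rw [← this, LinearMap.BilinForm.orthogonal_bot]
    have := Submodule.finrank_sup_add_finrank_inf_eq V kG
    rw [htop, finrank_top, hfin, hsum] at this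
    have h0 : Module.finrank F ↥(V ⊓ kG) = 0 := by omega
    rw [Submodule.finrank_eq_zero] at h0
    exact h0
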